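/- The 3-dimensional model is non-Paschian: there exist three non-collinear points P, Q, R of the model and a line d of the model not through P, Q or R, such that d contains a point strictly between P and Q, d intersects both lines QR and RP of the model, but d contains no point strictly between Q and R and no point strictly between R and P. -/

import Mathlib

open Real

noncomputable section

/-- The vertices of the regular pentagon in the horizontal plane of `ℝ³`. -/
def pentagonPt (k : Fin 5) : Fin 3 → ℝ :=
  ![Real.cos (2 * π * (k.val : ℝ) / 5), Real.sin (2 * π * (k.val : ℝ) / 5), 0]

/-- The vertical unit direction. -/
def e3 : Fin 3 → ℝ := ![0, 0, 1]

/-- The vertical line of the model over the `k`-th pentagon vertex. -/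
def vertLine (k : Fin 5) : Set (Fin 3 → ℝ) := {x | ∃ t : ℝ, x = pentagonPt k + t • e3}

/-- The points of the model: the union of the five vertical lines. -/
def ModelPoints : Set (Fin 3 → ℝ) := ⋃ k, vertLine k

/-- Euclidean dot product in `ℝ³`. -/
def dot (n x : Fin 3 → ℝ) : ℝ := n 0 * x 0 + n 1 * x 1 + n 2 * x 2

/-- A five-point line of the model: the trace on the model points of a plane through the
origin with non-horizontal normal (such a plane contains no vertical line). -/
def IsFivePointLine (l : Set (Fin 3 → ℝ)) : Prop :=
  ∃ n : Fin 3 → ℝ, n 2 ≠ 0 ∧ l = {x ∈ ModelPoints | dot n x = 0}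

/-- A line of the model: a vertical line or a five-point line. -/
def IsModelLine (l : Set (Fin 3 → ℝ)) : Prop :=
  (∃ k, l = vertLine k) ∨ IsFivePointLine l

/-- Cyclic distance on `Fin 5`. -/
def cdist (j k : Fin 5) : ℕ :=
  min ((j.val + 5 - k.val) % 5) ((k.val + 5 - j.val) % 5)

/-- Betweenness on the five-point line `Fin 5`. -/
def Bet (x y z : Fin 5) : Prop :=
  x ≠ y ∧ y ≠ z ∧ x ≠ z ∧ cdist y x = cdist y z

/-- Betweenness in the model: Euclidean strict betweenness on a common vertical line, or,
for three points on three distinct vertical lines lying in a common plane through the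
origin with non-horizontal normal, the pentagon betweenness of the underlying vertices. -/
def MBet (X Y Z : Fin 3 → ℝ) : Prop :=
  (∃ k : Fin 5, X ∈ vertLine k ∧ Y ∈ vertLine k ∧ Z ∈ vertLine k ∧ Sbtw ℝ X Y Z) ∨
  (∃ j k l : Fin 5, j ≠ k ∧ k ≠ l ∧ j ≠ l ∧
    X ∈ vertLine j ∧ Y ∈ vertLine k ∧ Z ∈ vertLine l ∧
    (∃ n : Fin 3 → ℝ, n 2 ≠ 0 ∧ dot n X = 0 ∧ dot n Y = 0 ∧ dot n Z = 0) ∧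
    Bet j k l)

/- ### Auxiliary lemmas -/

lemma s1_pos : 0 < Real.sin (2*π*1/5) := by
  apply Real.sin_pos_of_pos_of_lt_pi <;> nlinarith [Real.pi_pos]
lemma s2_pos : 0 < Real.sin (2*π*2/5) := by
  apply Real.sin_pos_of_pos_of_lt_pi <;> nlinarith [Real.pi_pos]
lemma s3_neg : Real.sin (2*π*3/5) < 0 := by
  have h : (2*π*3/5 : ℝ) = π/5 + π := by ring
  rw [h, Real.sin_add_pi]
  nlinarith [Real.sin_pos_of_pos_of_lt_pi (show (0:ℝ) < π/5 by positivity)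
    (by nlinarith [Real.pi_pos] : (π/5:ℝ) < π)]
lemma s4_neg : Real.sin (2*π*4/5) < 0 := by
  have h : (2*π*4/5 : ℝ) = 3*π/5 + π := by ring
  rw [h, Real.sin_add_pi]
  nlinarith [Real.sin_pos_of_pos_of_lt_pi (show (0:ℝ) < 3*π/5 by positivity)
    (by nlinarith [Real.pi_pos] : (3*π/5:ℝ) < π)]
lemma c1_pos : 0 < Real.cos (2*π*1/5) := by
  apply Real.cos_pos_of_mem_Ioo
  constructor <;> nlinarith [Real.pi_pos]
lemma c2_neg : Real.cos (2*π*2/5) < 0 := by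
  apply Real.cos_neg_of_pi_div_two_lt_of_lt <;> nlinarith [Real.pi_pos]
lemma c3_neg : Real.cos (2*π*3/5) < 0 := by
  apply Real.cos_neg_of_pi_div_two_lt_of_lt <;> nlinarith [Real.pi_pos]
lemma c4_pos : 0 < Real.cos (2*π*4/5) := by
  have h : (2*π*4/5 : ℝ) = -(2*π*1/5) + 2*π := by ring
  rw [h, Real.cos_add_two_pi, Real.cos_neg]
  exact c1_pos
lemma c1_pos' : 0 < Real.cos (2*π/5) := by
  have : (2*π/5:ℝ) = 2*π*1/5 := by ring
  rw [this]; exact c1_pos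
lemma s1_pos' : 0 < Real.sin (2*π/5) := by
  have : (2*π/5:ℝ) = 2*π*1/5 := by ring
  rw [this]; exact s1_pos

lemma vertLine_coord {x : Fin 3 → ℝ} {k : Fin 5} (h : x ∈ vertLine k) :
    x 0 = Real.cos (2*π*(k.val : ℝ)/5) ∧ x 1 = Real.sin (2*π*(k.val : ℝ)/5) := by
  obtain ⟨t, rfl⟩ := h
  simp [pentagonPt, e3]

lemma val3 : (((3:Fin 5).val) : ℝ) = 3 := by norm_num [show (3:Fin 5).val = 3 from rfl]

lemma vert_sin3 {x : Fin 3 → ℝ} (h : x ∈ vertLine 3) : x 1 = Real.sin (2*π*3/5) := by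
  have := (vertLine_coord h).2
  norm_num at this
  exact this

set_option maxHeartbeats 1000000 in
lemma pin {j k : Fin 5}
    (hc : Real.cos (2*π*(j.val:ℝ)/5) = Real.cos (2*π*(k.val:ℝ)/5))
    (hs : Real.sin (2*π*(j.val:ℝ)/5) = Real.sin (2*π*(k.val:ℝ)/5)) : j = k := by
  fin_cases j <;> fin_cases k <;> first
    | rfl
    | (exfalso; norm_num at hc hs;
       linarith [s1_pos, s2_pos, s3_neg, s4_neg, c1_pos, c2_neg, c3_neg, c4_pos, c1_pos', s1_pos'])

/-- If `x` lies on two vertical lines, the indices agree. -/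
lemma vert_eq {x : Fin 3 → ℝ} {j k : Fin 5} (hj : x ∈ vertLine j) (hk : x ∈ vertLine k) :
    j = k := by
  obtain ⟨h0, h1⟩ := vertLine_coord hj
  obtain ⟨h0', h1'⟩ := vertLine_coord hk
  exact pin (h0.symm.trans h0') (h1.symm.trans h1')


set_option maxHeartbeats 1000000 in
/-- The model is non-Paschian: there are three non-collinear points `P, Q, R` and a model
line `d` avoiding them which meets the open segment `PQ` and meets the lines `QR` and
`RP`, yet contains no point strictly between `Q` and `R` nor between `R` and `P`. -/
theorem model_not_Paschian :
    ∃ P Q R : Fin 3 → ℝ, P ∈ ModelPoints ∧ Q ∈ ModelPoints ∧ R ∈ ModelPoints ∧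
      (¬ ∃ l : Set (Fin 3 → ℝ), IsModelLine l ∧ P ∈ l ∧ Q ∈ l ∧ R ∈ l) ∧
      ∃ d : Set (Fin 3 → ℝ), IsModelLine d ∧ P ∉ d ∧ Q ∉ d ∧ R ∉ d ∧
        (∃ D, D ∈ d ∧ MBet P D Q) ∧
        (∃ lQR : Set (Fin 3 → ℝ), IsModelLine lQR ∧ Q ∈ lQR ∧ R ∈ lQR ∧
          (d ∩ lQR).Nonempty) ∧
        (∃ lRP : Set (Fin 3 → ℝ), IsModelLine lRP ∧ R ∈ lRP ∧ P ∈ lRP ∧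
          (d ∩ lRP).Nonempty) ∧
        (¬ ∃ E, E ∈ d ∧ MBet Q E R) ∧
        (¬ ∃ F, F ∈ d ∧ MBet R F P) := by
  set c1 := Real.cos (2*π*1/5) with hc1
  set s1 := Real.sin (2*π*1/5) with hs1
  set c2 := Real.cos (2*π*2/5) with hc2
  set s2 := Real.sin (2*π*2/5) with hs2
  set c3 := Real.cos (2*π*3/5) with hc3
  set s3 := Real.sin (2*π*3/5) with hs3
  refine ⟨pentagonPt 0, pentagonPt 1, pentagonPt 2 + (1:ℝ) • e3, ?_, ?_, ?_, ?_, ?_⟩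
  · exact Set.mem_iUnion.2 ⟨0, ⟨0, by simp⟩⟩
  · exact Set.mem_iUnion.2 ⟨1, ⟨0, by simp⟩⟩
  · exact Set.mem_iUnion.2 ⟨2, ⟨1, rfl⟩⟩
  · -- non-collinearity
    rintro ⟨l, hl | ⟨n, hn2, rfl⟩, hP, hQ, hR⟩
    · obtain ⟨k, rfl⟩ := hl
      have h1 := (vertLine_coord hP).2
      have h2 := (vertLine_coord hQ).2
      have e1 : (pentagonPt 0) 1 = 0 := by norm_num [pentagonPt]
      have e2 : (pentagonPt 1) 1 = s1 := by norm_num [pentagonPt, hs1]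
      rw [e1] at h1; rw [e2] at h2
      have : s1 = 0 := h2.trans h1.symm
      linarith [s1_pos]
    · have hdP : dot n (pentagonPt 0) = n 0 := by
        norm_num [Matrix.cons_val_two, Matrix.tail_cons, Matrix.head_cons, dot, pentagonPt]
      have hdQ : dot n (pentagonPt 1) = n 0 * c1 + n 1 * s1 := by
        norm_num [Matrix.cons_val_two, Matrix.tail_cons, Matrix.head_cons, dot, pentagonPt, hc1, hs1]
      have hdR : dot n (pentagonPt 2 + (1:ℝ) • e3) = n 0 * c2 + n 1 * s2 + n 2 := by
        norm_num [Matrix.cons_val_two, Matrix.tail_cons, Matrix.head_cons, dot, pentagonPt, e3, hc2, hs2]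
      have h0 : n 0 = 0 := by rw [← hdP]; exact hP.2
      have h1 : n 1 = 0 := by
        have := hQ.2; rw [hdQ, h0] at this
        have : n 1 * s1 = 0 := by linarith
        rcases mul_eq_zero.1 this with h | h
        · exact h
        · exact absurd h (ne_of_gt s1_pos)
      have := hR.2; rw [hdR, h0, h1] at this
      exact hn2 (by linarith)
  · refine ⟨vertLine 3, Or.inl ⟨3, rfl⟩, ?_, ?_, ?_, ?_, ?_, ?_, ?_, ?_⟩
    · -- P ∉ d
      intro h
      have h1 := vert_sin3 h
      have e1 : (pentagonPt 0) 1 = 0 := by norm_num [pentagonPt]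
      rw [e1] at h1
      linarith [s3_neg]
    · -- Q ∉ d
      intro h
      have h1 := vert_sin3 h
      have e1 : (pentagonPt 1) 1 = s1 := by norm_num [pentagonPt, hs1]
      rw [e1, hs1] at h1
      linarith [s1_pos, s3_neg]
    · -- R ∉ d
      intro h
      have h1 := vert_sin3 h
      have e1 : (pentagonPt 2 + (1:ℝ) • e3) 1 = s2 := by norm_num [pentagonPt, e3, hs2]
      rw [e1, hs2] at h1
      linarith [s2_pos, s3_neg]
    · -- D between P and Q
      refine ⟨pentagonPt 3, ⟨0, by simp⟩, Or.inr ⟨0, 3, 1, by decide, by decide, by decide,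
        ⟨0, by simp⟩, ⟨0, by simp⟩, ⟨0, by simp⟩,
        ⟨e3, by norm_num [Matrix.cons_val_two, Matrix.tail_cons, Matrix.head_cons, e3], ?_, ?_, ?_⟩, by unfold Bet cdist; decide⟩⟩ <;>
        norm_num [Matrix.cons_val_two, Matrix.tail_cons, Matrix.head_cons, dot, e3, pentagonPt]
    · -- line QR
      refine ⟨{x ∈ ModelPoints | dot ![s1, -c1, c1*s2 - s1*c2] x = 0},
        Or.inr ⟨![s1, -c1, c1*s2 - s1*c2], ?_, rfl⟩, ⟨?_, ?_⟩, ⟨?_, ?_⟩, ?_⟩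
      · -- normal's third entry nonzero
        have key : c1*s2 - s1*c2 = s1 := by
          have h := Real.sin_sub (2*π*2/5) (2*π*1/5)
          have h2 : (2*π*2/5 - 2*π*1/5 : ℝ) = 2*π*1/5 := by ring
          rw [h2] at h
          rw [hs1, hc1, hs2, hc2]
          linarith
        have e2 : (![s1, -c1, c1*s2 - s1*c2] : Fin 3 → ℝ) 2 = c1*s2 - s1*c2 := rfl
        rw [e2, key, hs1]
        exact ne_of_gt s1_pos
      · exact Set.mem_iUnion.2 ⟨1, ⟨0, by simp⟩⟩
      · norm_num [Matrix.cons_val_two, Matrix.tail_cons, Matrix.head_cons, dot, pentagonPt, hc1, hs1]; ring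
      · exact Set.mem_iUnion.2 ⟨2, ⟨1, rfl⟩⟩
      · norm_num [Matrix.cons_val_two, Matrix.tail_cons, Matrix.head_cons, dot, pentagonPt, e3, hc2, hs2]; ring
      · -- intersection with d
        have key : c1*s2 - s1*c2 = s1 := by
          have h := Real.sin_sub (2*π*2/5) (2*π*1/5)
          have h2 : (2*π*2/5 - 2*π*1/5 : ℝ) = 2*π*1/5 := by ring
          rw [h2] at h
          rw [hs1, hc1, hs2, hc2]
          linarith
        have hne : c1*s2 - s1*c2 ≠ 0 := by rw [key]; exact ne_of_gt s1_pos
        refine ⟨pentagonPt 3 + (-(s1*c3 - c1*s3)/(c1*s2 - s1*c2)) • e3,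
          ⟨-(s1*c3 - c1*s3)/(c1*s2 - s1*c2), rfl⟩,
          Set.mem_iUnion.2 ⟨3, ⟨_, rfl⟩⟩, ?_⟩
        have : dot ![s1, -c1, c1*s2 - s1*c2] (pentagonPt 3 + (-(s1*c3 - c1*s3)/(c1*s2 - s1*c2)) • e3)
            = s1*c3 - c1*s3 + (c1*s2 - s1*c2) * (-(s1*c3 - c1*s3)/(c1*s2 - s1*c2)) := by
          norm_num [Matrix.cons_val_two, Matrix.tail_cons, Matrix.head_cons, dot, pentagonPt, e3, hc3, hs3, val3]; ring
        rw [this]; field_simp; ring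
    · -- line RP
      refine ⟨{x ∈ ModelPoints | dot ![0, 1, -s2] x = 0},
        Or.inr ⟨![0, 1, -s2], ?_, rfl⟩, ⟨?_, ?_⟩, ⟨?_, ?_⟩, ?_⟩
      · simpa using ne_of_gt s2_pos
      · exact Set.mem_iUnion.2 ⟨2, ⟨1, rfl⟩⟩
      · norm_num [Matrix.cons_val_two, Matrix.tail_cons, Matrix.head_cons, dot, pentagonPt, e3, hs2]
      · exact Set.mem_iUnion.2 ⟨0, ⟨0, by simp⟩⟩
      · norm_num [Matrix.cons_val_two, Matrix.tail_cons, Matrix.head_cons, dot, pentagonPt]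
      · refine ⟨pentagonPt 3 + (s3/s2) • e3, ⟨s3/s2, rfl⟩,
          Set.mem_iUnion.2 ⟨3, ⟨_, rfl⟩⟩, ?_⟩
        have : dot ![0, 1, -s2] (pentagonPt 3 + (s3/s2) • e3) = s3 + (-s2) * (s3/s2) := by
          norm_num [Matrix.cons_val_two, Matrix.tail_cons, Matrix.head_cons, dot, pentagonPt, e3, hs3, val3]
        have hs2ne : s2 ≠ 0 := ne_of_gt (hs2 ▸ s2_pos)
        rw [this]; field_simp; ring
    · -- no point of d between Q and R
      rintro ⟨E, hEd, hbet⟩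
      rcases hbet with ⟨k, hQ', hE', _, _⟩ | ⟨j, k, l, _, _, _, hQj, hEk, hRl, _, hbet5⟩
      · have hk3 : k = 3 := vert_eq hE' hEd
        subst hk3
        have h1 := vert_sin3 hQ'
        have e1 : (pentagonPt 1) 1 = s1 := by norm_num [pentagonPt, hs1]
        rw [e1, hs1] at h1
        linarith [s1_pos, s3_neg]
      · have hj : j = 1 := by
          refine pin ?_ ?_ <;> [rw [← (vertLine_coord hQj).1]; rw [← (vertLine_coord hQj).2]] <;>
            norm_num [pentagonPt]
        have hk : k = 3 := vert_eq hEk hEd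
        have hl : l = 2 := by
          refine pin ?_ ?_ <;> [rw [← (vertLine_coord hRl).1]; rw [← (vertLine_coord hRl).2]] <;>
            norm_num [pentagonPt, e3]
        subst hj; subst hk; subst hl
        exact absurd hbet5 (by unfold Bet cdist; decide)
    · -- no point of d between R and P
      rintro ⟨F, hFd, hbet⟩
      rcases hbet with ⟨k, hR', hF', _, _⟩ | ⟨j, k, l, _, _, _, hRj, hFk, hPl, _, hbet5⟩
      · have hk3 : k = 3 := vert_eq hF' hFd
        subst hk3
        have h1 := vert_sin3 hR'
        have e1 : (pentagonPt 2 + (1:ℝ) • e3) 1 = s2 := by norm_num [pentagonPt, e3, hs2]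
        rw [e1, hs2] at h1
        linarith [s2_pos, s3_neg]
      · have hj : j = 2 := by
          refine pin ?_ ?_ <;> [rw [← (vertLine_coord hRj).1]; rw [← (vertLine_coord hRj).2]] <;>
            norm_num [pentagonPt, e3]
        have hk : k = 3 := vert_eq hFk hFd
        have hl : l = 0 := by
          refine pin ?_ ?_ <;> [rw [← (vertLine_coord hPl).1]; rw [← (vertLine_coord hPl).2]] <;>
            norm_num [pentagonPt]
        subst hj; subst hk; subst hl
        exact absurd hbet5 (by unfold Bet cdist; decide)


end
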